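/- The jet z(x,y) = (−x², y) ∈ J²(2,2) has the following properties: (a) f_0(x,y) = (−x² − y⁴, y) and f_1(x,y) = (−x² + y⁴, y) are both realizations of z (they have the same 2-jet at the origin); (b) the origin is a strict local Pareto optimum (for maximization) of f_0; (c) the origin is not a local Pareto optimum of f_1. -/

import Mathlib

noncomputable def f₀ : ℝ × ℝ → ℝ × ℝ := fun p => (-p.1 ^ 2 - p.2 ^ 4, p.2)

noncomputable def f₁ : ℝ × ℝ → ℝ × ℝ := fun p => (-p.1 ^ 2 + p.2 ^ 4, p.2)

lemma aux_deriv (c : ℝ) : ∀ i ≤ 3, iteratedDeriv i (fun t : ℝ => c * t ^ 4) 0 = 0 := by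
  have h1 : deriv (fun t : ℝ => c * t ^ 4) = fun t : ℝ => c * 4 * t ^ 3 := by
    funext t
    rw [deriv_const_mul _ (by fun_prop), deriv_pow_field]
    ring
  have h2 : deriv (fun t : ℝ => c * 4 * t ^ 3) = fun t : ℝ => c * 12 * t ^ 2 := by
    funext t
    rw [deriv_const_mul _ (by fun_prop), deriv_pow_field]
    ring
  intro i hi
  interval_cases i
  · simp
  · rw [iteratedDeriv_one, h1]; simp
  · rw [show (2 : ℕ) = 1 + 1 from rfl, iteratedDeriv_succ, iteratedDeriv_one, h1, h2]; simp
  · rw [show (3 : ℕ) = 1 + 1 + 1 from rfl, iteratedDeriv_succ, iteratedDeriv_succ,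
      iteratedDeriv_one, h1, h2]
    have h3 : deriv (fun t : ℝ => c * 12 * t ^ 2) = fun t : ℝ => c * 24 * t ^ 1 := by
      funext t
      rw [deriv_const_mul _ (by fun_prop), deriv_pow_field]
      ring
    rw [h3]; simp

lemma aux_fd1 (c : ℝ) : ∀ i ≤ 3, iteratedFDeriv ℝ i (fun t : ℝ => c * t ^ 4) 0 = 0 := by
  intro i hi
  have := congrFun (iteratedFDeriv_eq_equiv_comp (𝕜 := ℝ) (n := i)
    (f := fun t : ℝ => c * t ^ 4)) 0
  rw [this, Function.comp_apply, aux_deriv c i hi, map_zero]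

lemma aux_fd2 (c : ℝ) : ∀ i ≤ 2,
    iteratedFDeriv ℝ i (fun p : ℝ × ℝ => ((c * p.2 ^ 4, 0) : ℝ × ℝ)) 0 = 0 := by
  intro i hi
  have hsnd : ContDiff ℝ 2 (fun t : ℝ => c * t ^ 4) := by fun_prop
  have h1 : (fun p : ℝ × ℝ => ((c * p.2 ^ 4, 0) : ℝ × ℝ)) =
      (ContinuousLinearMap.inl ℝ ℝ ℝ) ∘
        ((fun t : ℝ => c * t ^ 4) ∘ (ContinuousLinearMap.snd ℝ ℝ ℝ)) := by
    funext p; rfl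
  have hcomp : ContDiff ℝ 2 ((fun t : ℝ => c * t ^ 4) ∘ (ContinuousLinearMap.snd ℝ ℝ ℝ)) :=
    hsnd.comp (ContinuousLinearMap.contDiff _)
  have hi' : (i : WithTop ℕ∞) ≤ 2 := by exact_mod_cast hi
  rw [h1, ContinuousLinearMap.iteratedFDeriv_comp_left _ hcomp.contDiffAt hi',
    ContinuousLinearMap.iteratedFDeriv_comp_right _ hsnd _ hi']
  have h2 : iteratedFDeriv ℝ i (fun t : ℝ => c * t ^ 4)
      ((ContinuousLinearMap.snd ℝ ℝ ℝ) 0) = 0 := by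
    simpa using aux_fd1 c i (hi.trans (by norm_num))
  rw [h2]
  refine ContinuousMultilinearMap.ext fun m => ?_
  simp [ContinuousLinearMap.compContinuousMultilinearMap_coe,
    ContinuousMultilinearMap.compContinuousLinearMap_apply]

theorem stmt_15 :
    -- (a) f₀ and f₁ are realizations of the same 2-jet z(x,y) = (−x², y) at 0
    (∀ i ≤ 2, iteratedFDeriv ℝ i f₀ 0 = iteratedFDeriv ℝ i f₁ 0) ∧
    (∀ i ≤ 2, iteratedFDeriv ℝ i f₀ 0 =
      iteratedFDeriv ℝ i (fun p : ℝ × ℝ => (-p.1 ^ 2, p.2)) 0) ∧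
    -- (b) the origin is a strict local Pareto optimum (maximization) of f₀
    (∃ U ∈ nhds (0 : ℝ × ℝ), ∀ q ∈ U, q ≠ 0 →
      ¬((f₀ 0).1 ≤ (f₀ q).1 ∧ (f₀ 0).2 ≤ (f₀ q).2)) ∧
    -- (c) the origin is not a local Pareto optimum of f₁
    (∀ U ∈ nhds (0 : ℝ × ℝ), ∃ q ∈ U,
      ((f₁ 0).1 ≤ (f₁ q).1 ∧ (f₁ 0).2 ≤ (f₁ q).2) ∧
      ((f₁ 0).1 < (f₁ q).1 ∨ (f₁ 0).2 < (f₁ q).2)) := by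
  set z : ℝ × ℝ → ℝ × ℝ := fun p => (-p.1 ^ 2, p.2) with hz
  have hzc : ContDiff ℝ 2 z := by rw [hz]; fun_prop
  have key : ∀ (c : ℝ), ∀ i ≤ 2,
      iteratedFDeriv ℝ i (fun p : ℝ × ℝ => z p + (c * p.2 ^ 4, 0)) 0 =
        iteratedFDeriv ℝ i z 0 := by
    intro c i hi
    have hgc : ContDiff ℝ 2 (fun p : ℝ × ℝ => ((c * p.2 ^ 4, 0) : ℝ × ℝ)) := by fun_prop
    refine ContinuousMultilinearMap.ext fun m => ?_
    rw [iteratedFDeriv_add_apply' (i := i) (hzc.of_le (by exact_mod_cast hi)).contDiffAt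
      (hgc.of_le (by exact_mod_cast hi)).contDiffAt, aux_fd2 c i hi]
    simp
  have hf0 : f₀ = fun p : ℝ × ℝ => z p + ((-1 : ℝ) * p.2 ^ 4, 0) := by
    funext p
    simp only [f₀, hz, Prod.mk_add_mk, Prod.mk.injEq]
    constructor <;> ring
  have hf1 : f₁ = fun p : ℝ × ℝ => z p + ((1 : ℝ) * p.2 ^ 4, 0) := by
    funext p
    simp only [f₁, hz, Prod.mk_add_mk, Prod.mk.injEq]
    constructor <;> ring
  refine ⟨?_, ?_, ?_, ?_⟩
  · intro i hi
    rw [hf0, hf1, key (-1) i hi, key 1 i hi]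
  · intro i hi
    rw [hf0, key (-1) i hi]
  · refine ⟨Set.univ, Filter.univ_mem, fun q _ hq ⟨h1, h2⟩ => hq ?_⟩
    have h1' : (0 : ℝ) ≤ -q.1 ^ 2 - q.2 ^ 4 := by simpa [f₀] using h1
    have e1 : q.1 ^ 2 = 0 := le_antisymm (by nlinarith [sq_nonneg q.1, sq_nonneg (q.2 ^ 2)])
      (sq_nonneg q.1)
    have e2 : q.2 ^ 4 = 0 := by nlinarith [sq_nonneg (q.2 ^ 2), sq_nonneg q.1]
    exact Prod.ext (pow_eq_zero_iff (by norm_num) |>.mp e1)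
      (pow_eq_zero_iff (by norm_num) |>.mp e2)
  · intro U hU
    rcases Metric.mem_nhds_iff.mp hU with ⟨ε, hε, hball⟩
    refine ⟨(0, ε / 2), hball ?_, ?_, ?_⟩
    · simp only [Metric.mem_ball, dist_zero_right, Prod.norm_def, norm_zero,
        Real.norm_eq_abs, abs_of_pos (half_pos hε)]
      rw [max_eq_right (by linarith)]
      linarith
    · constructor <;> simp [f₁] <;> positivity
    · right; simp [f₁]; positivity
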